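/- Let Ω ⊆ ℝ² be open with q : Ω → ℝ smooth, nowhere vanishing, C² and satisfying x q_x + y q_y = q on Ω, let Sˣ, Sʸ : Ω → ℝ be smooth with x Sˣ + y Sʸ = 2 q² on Ω, let A, B be smooth functions of one real variable, and let λ ∈ ℝ. Suppose the equations (E4) A''(x) − (Sˣ/q²) A'(x) = B''(y) − (Sʸ/q²) B'(y) (common value denoted w) and (E5) −λ/q² = (1/2) w − (q_x A'(x) + q_xx A(x) + q_y B'(y) + q_yy B(y))/q + (q_x² A(x) + q_y² B(y))/q² + (Sˣ q_x A(x) + Sʸ q_y B(y))/q³ hold on Ω. Then for every c ∈ ℝ, the pair Ã(x) := A(x) + c x², B̃(y) := B(y) − c y² also satisfies (E4) and (E5) on Ω, with the same Sˣ, Sʸ, q, λ. -/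

import Mathlib

open Real Set

/-- Partial derivative in the first variable. -/
noncomputable def px (f : ℝ × ℝ → ℝ) : ℝ × ℝ → ℝ :=
  fun p => deriv (fun t => f (t, p.2)) p.1

/-- Partial derivative in the second variable. -/
noncomputable def py (f : ℝ × ℝ → ℝ) : ℝ × ℝ → ℝ :=
  fun p => deriv (fun t => f (p.1, t)) p.2

private lemma algE4 (x y qv sx sy a' a'' b' b'' c : ℝ) (hq : qv ≠ 0)
    (hR : x * sx + y * sy = 2 * qv ^ 2)
    (h : a'' - sx / qv ^ 2 * a' = b'' - sy / qv ^ 2 * b') :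
    (a'' + 2*c) - sx / qv ^ 2 * (a' + c*(2*x)) = (b'' - 2*c) - sy / qv ^ 2 * (b' - c*(2*y)) := by
  have h2 : qv ^ 2 ≠ 0 := pow_ne_zero _ hq
  field_simp at h ⊢
  linear_combination h - 2*c*hR

private lemma algE5 (x y qv qx qy qxx qyy sx sy Av Bv a' a'' b' c lam : ℝ) (hq : qv ≠ 0)
    (hE : x*qx + y*qy = qv) (hR : x*sx + y*sy = 2*qv^2) (hK : x^2*qxx = y^2*qyy)
    (hold : -(lam/qv^2) = (1/2)*(a'' - sx/qv^2*a')
      - (qx*a' + qxx*Av + qy*b' + qyy*Bv)/qv + (qx^2*Av + qy^2*Bv)/qv^2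
      + (sx*qx*Av + sy*qy*Bv)/qv^3) :
    -(lam/qv^2) = (1/2)*((a''+2*c) - sx/qv^2*(a'+c*(2*x)))
      - (qx*(a'+c*(2*x)) + qxx*(Av+c*x^2) + qy*(b'-c*(2*y)) + qyy*(Bv-c*y^2))/qv
      + (qx^2*(Av+c*x^2) + qy^2*(Bv-c*y^2))/qv^2
      + (sx*qx*(Av+c*x^2) + sy*qy*(Bv-c*y^2))/qv^3 := by
  rw [hold]
  have h2 : qv ^ 2 ≠ 0 := pow_ne_zero _ hq
  have h3 : qv ^ 3 ≠ 0 := pow_ne_zero _ hq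
  field_simp
  linear_combination (-(qv^2)*hK + (x*sx + qv*x*qx - qv*y*qy - qv^2)*hE + (-(y*qy))*hR) * c * (-2)

private lemma key_second (Ω : Set (ℝ × ℝ)) (hΩ : IsOpen Ω) (q : ℝ × ℝ → ℝ)
    (hq : ContDiffOn ℝ (⊤ : ℕ∞) q Ω)
    (heuler : ∀ p ∈ Ω, p.1 * px q p + p.2 * py q p = q p) :
    ∀ p ∈ Ω, p.1 ^ 2 * px (px q) p = p.2 ^ 2 * py (py q) p := by
  have hqat : ∀ s ∈ Ω, ContDiffAt ℝ (⊤ : ℕ∞) q s := fun s hs => hq.contDiffAt (hΩ.mem_nhds hs)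
  have hfd : ∀ s ∈ Ω, HasFDerivAt q (fderiv ℝ q s) s := fun s hs =>
    ((hqat s hs).differentiableAt (by simp)).hasFDerivAt
  have lineX : ∀ (b t : ℝ), HasDerivAt (fun t : ℝ => ((t, b) : ℝ × ℝ)) (1, 0) t := fun b t =>
    (hasDerivAt_id t).prodMk (hasDerivAt_const t b)
  have lineY : ∀ (a t : ℝ), HasDerivAt (fun t : ℝ => ((a, t) : ℝ × ℝ)) (0, 1) t := fun a t =>
    (hasDerivAt_const t a).prodMk (hasDerivAt_id t)
  have hpx : ∀ s ∈ Ω, px q s = fderiv ℝ q s (1, 0) := by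
    intro s hs
    exact ((hfd s hs).comp_hasDerivAt s.1 (lineX s.2 s.1)).deriv
  have hpy : ∀ s ∈ Ω, py q s = fderiv ℝ q s (0, 1) := by
    intro s hs
    exact ((hfd s hs).comp_hasDerivAt s.2 (lineY s.1 s.2)).deriv
  rintro ⟨x, y⟩ hp
  have hmem : ∀ᶠ s in nhds ((x, y) : ℝ × ℝ), s ∈ Ω := hΩ.mem_nhds hp
  have hf' : DifferentiableAt ℝ (fderiv ℝ q) (x, y) := by
    have := (hqat (x, y) hp).fderiv_right (m := (⊤ : ℕ∞)) (by exact_mod_cast le_top)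
    exact this.differentiableAt (by simp)
  set f'' := fderiv ℝ (fderiv ℝ q) (x, y) with hf''def
  have hF : HasFDerivAt (fderiv ℝ q) f'' (x, y) := hf'.hasFDerivAt
  have hsymm : f'' (1, 0) (0, 1) = f'' (0, 1) (1, 0) :=
    second_derivative_symmetric_of_eventually (hmem.mono fun s hs => hfd s hs) hF (1, 0) (0, 1)
  have hdirX : ∀ v : ℝ × ℝ, HasDerivAt (fun t => fderiv ℝ q (t, y) v) (f'' (1, 0) v) x := by
    intro v
    have h1 : HasDerivAt (fun t => fderiv ℝ q (t, y)) (f'' (1, 0)) x :=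
      hF.comp_hasDerivAt x (lineX y x)
    simpa using h1.clm_apply (hasDerivAt_const x v)
  have hdirY : ∀ v : ℝ × ℝ, HasDerivAt (fun t => fderiv ℝ q (x, t) v) (f'' (0, 1) v) y := by
    intro v
    have h1 : HasDerivAt (fun t => fderiv ℝ q (x, t)) (f'' (0, 1)) y :=
      hF.comp_hasDerivAt y (lineY x y)
    simpa using h1.clm_apply (hasDerivAt_const y v)
  have hevX : ∀ᶠ t in nhds x, (t, y) ∈ Ω := by
    have hc : ContinuousAt (fun t : ℝ => ((t, y) : ℝ × ℝ)) x := by fun_prop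
    exact hc.preimage_mem_nhds (hΩ.mem_nhds hp)
  have hevY : ∀ᶠ t in nhds y, (x, t) ∈ Ω := by
    have hc : ContinuousAt (fun t : ℝ => ((x, t) : ℝ × ℝ)) y := by fun_prop
    exact hc.preimage_mem_nhds (hΩ.mem_nhds hp)
  have Hxx : HasDerivAt (fun t => px q (t, y)) (f'' (1, 0) (1, 0)) x :=
    (hdirX (1, 0)).congr_of_eventuallyEq (hevX.mono fun t ht => hpx (t, y) ht)
  have Hxy : HasDerivAt (fun t => py q (t, y)) (f'' (1, 0) (0, 1)) x :=
    (hdirX (0, 1)).congr_of_eventuallyEq (hevX.mono fun t ht => hpy (t, y) ht)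
  have Hyx : HasDerivAt (fun t => px q (x, t)) (f'' (0, 1) (1, 0)) y :=
    (hdirY (1, 0)).congr_of_eventuallyEq (hevY.mono fun t ht => hpx (x, t) ht)
  have Hyy : HasDerivAt (fun t => py q (x, t)) (f'' (0, 1) (0, 1)) y :=
    (hdirY (0, 1)).congr_of_eventuallyEq (hevY.mono fun t ht => hpy (x, t) ht)
  have HqX : HasDerivAt (fun t => q (t, y)) (fderiv ℝ q (x, y) (1, 0)) x :=
    (hfd (x, y) hp).comp_hasDerivAt x (lineX y x)
  have HqY : HasDerivAt (fun t => q (x, t)) (fderiv ℝ q (x, y) (0, 1)) y :=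
    (hfd (x, y) hp).comp_hasDerivAt y (lineY x y)
  -- differentiate Euler in x
  have hEx : HasDerivAt (fun t => t * px q (t, y) + y * py q (t, y) - q (t, y))
      (1 * px q (x, y) + x * (f'' (1, 0) (1, 0)) + y * (f'' (1, 0) (0, 1))
        - fderiv ℝ q (x, y) (1, 0)) x :=
    (((hasDerivAt_id x).mul Hxx).add (Hxy.const_mul y)).sub HqX
  have hzX : (fun t => t * px q (t, y) + y * py q (t, y) - q (t, y)) =ᶠ[nhds x]
      (fun _ => (0 : ℝ)) :=
    hevX.mono fun t ht => by simpa [sub_eq_zero] using heuler (t, y) ht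
  have h1 : 1 * px q (x, y) + x * (f'' (1, 0) (1, 0)) + y * (f'' (1, 0) (0, 1))
      - fderiv ℝ q (x, y) (1, 0) = 0 :=
    hEx.unique ((hasDerivAt_const x (0 : ℝ)).congr_of_eventuallyEq hzX)
  -- differentiate Euler in y
  have hEy : HasDerivAt (fun t => x * px q (x, t) + t * py q (x, t) - q (x, t))
      (x * (f'' (0, 1) (1, 0)) + (1 * py q (x, y) + y * (f'' (0, 1) (0, 1)))
        - fderiv ℝ q (x, y) (0, 1)) y :=
    ((Hyx.const_mul x).add ((hasDerivAt_id y).mul Hyy)).sub HqY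
  have hzY : (fun t => x * px q (x, t) + t * py q (x, t) - q (x, t)) =ᶠ[nhds y]
      (fun _ => (0 : ℝ)) :=
    hevY.mono fun t ht => by simpa [sub_eq_zero] using heuler (x, t) ht
  have h2 : x * (f'' (0, 1) (1, 0)) + (1 * py q (x, y) + y * (f'' (0, 1) (0, 1)))
      - fderiv ℝ q (x, y) (0, 1) = 0 :=
    hEy.unique ((hasDerivAt_const y (0 : ℝ)).congr_of_eventuallyEq hzY)
  have hp1 := hpx (x, y) hp
  have hp2 := hpy (x, y) hp
  have e1 : x * (f'' (1, 0) (1, 0)) + y * (f'' (1, 0) (0, 1)) = 0 := by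
    rw [hp1] at h1; linarith
  have e2 : x * (f'' (0, 1) (1, 0)) + y * (f'' (0, 1) (0, 1)) = 0 := by
    rw [hp2] at h2; linarith
  have hxx : px (px q) (x, y) = f'' (1, 0) (1, 0) := Hxx.deriv
  have hyy : py (py q) (x, y) = f'' (0, 1) (0, 1) := Hyy.deriv
  show x ^ 2 * px (px q) (x, y) = y ^ 2 * py (py q) (x, y)
  rw [hxx, hyy]
  linear_combination x * e1 - y * e2 - x * y * hsymm

theorem transform_A_B_by_c
    (Ω : Set (ℝ × ℝ)) (hΩ : IsOpen Ω)
    (q Sx Sy : ℝ × ℝ → ℝ) (A B : ℝ → ℝ) (lam : ℝ)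
    (hq : ContDiffOn ℝ (⊤ : ℕ∞) q Ω)
    (hq0 : ∀ p ∈ Ω, q p ≠ 0)
    (heuler : ∀ p ∈ Ω, p.1 * px q p + p.2 * py q p = q p)
    (hSx : ContDiffOn ℝ (⊤ : ℕ∞) Sx Ω)
    (hSy : ContDiffOn ℝ (⊤ : ℕ∞) Sy Ω)
    (hrel : ∀ p ∈ Ω, p.1 * Sx p + p.2 * Sy p = 2 * (q p) ^ 2)
    (hA : ContDiff ℝ (⊤ : ℕ∞) A) (hB : ContDiff ℝ (⊤ : ℕ∞) B)
    (hE4 : ∀ p ∈ Ω,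
      deriv (deriv A) p.1 - Sx p / (q p) ^ 2 * deriv A p.1 =
        deriv (deriv B) p.2 - Sy p / (q p) ^ 2 * deriv B p.2)
    (hE5 : ∀ p ∈ Ω,
      -(lam / (q p) ^ 2) =
        (1 / 2) * (deriv (deriv A) p.1 - Sx p / (q p) ^ 2 * deriv A p.1)
        - (px q p * deriv A p.1 + px (px q) p * A p.1
            + py q p * deriv B p.2 + py (py q) p * B p.2) / q p
        + ((px q p) ^ 2 * A p.1 + (py q p) ^ 2 * B p.2) / (q p) ^ 2
        + (Sx p * px q p * A p.1 + Sy p * py q p * B p.2) / (q p) ^ 3) :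
    ∀ c : ℝ,
      (∀ p ∈ Ω,
        deriv (deriv (fun x => A x + c * x ^ 2)) p.1
            - Sx p / (q p) ^ 2 * deriv (fun x => A x + c * x ^ 2) p.1 =
          deriv (deriv (fun y => B y - c * y ^ 2)) p.2
            - Sy p / (q p) ^ 2 * deriv (fun y => B y - c * y ^ 2) p.2) ∧
      (∀ p ∈ Ω,
        -(lam / (q p) ^ 2) =
          (1 / 2) * (deriv (deriv (fun x => A x + c * x ^ 2)) p.1
              - Sx p / (q p) ^ 2 * deriv (fun x => A x + c * x ^ 2) p.1)
          - (px q p * deriv (fun x => A x + c * x ^ 2) p.1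
              + px (px q) p * (A p.1 + c * p.1 ^ 2)
              + py q p * deriv (fun y => B y - c * y ^ 2) p.2
              + py (py q) p * (B p.2 - c * p.2 ^ 2)) / q p
          + ((px q p) ^ 2 * (A p.1 + c * p.1 ^ 2)
              + (py q p) ^ 2 * (B p.2 - c * p.2 ^ 2)) / (q p) ^ 2
          + (Sx p * px q p * (A p.1 + c * p.1 ^ 2)
              + Sy p * py q p * (B p.2 - c * p.2 ^ 2)) / (q p) ^ 3) := by
  intro c
  have hkey := key_second Ω hΩ q hq heuler
  have hdA : ∀ x : ℝ, deriv (fun x => A x + c * x ^ 2) x = deriv A x + c * (2 * x) := by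
    intro x
    rw [deriv_fun_add ((hA.differentiable (by simp)).differentiableAt) (by fun_prop),
      deriv_const_mul _ (differentiableAt_pow 2), deriv_pow_field]
    ring_nf
  have hdB : ∀ y : ℝ, deriv (fun y => B y - c * y ^ 2) y = deriv B y - c * (2 * y) := by
    intro y
    rw [deriv_fun_sub ((hB.differentiable (by simp)).differentiableAt) (by fun_prop),
      deriv_const_mul _ (differentiableAt_pow 2), deriv_pow_field]
    ring_nf
  have hA' : ContDiff ℝ (⊤ : ℕ∞) (deriv A) := (contDiff_infty_iff_deriv.mp hA).2
  have hB' : ContDiff ℝ (⊤ : ℕ∞) (deriv B) := (contDiff_infty_iff_deriv.mp hB).2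
  have hddA : ∀ x : ℝ, deriv (deriv (fun x => A x + c * x ^ 2)) x
      = deriv (deriv A) x + 2 * c := by
    intro x
    rw [funext hdA, deriv_fun_add ((hA'.differentiable (by simp)).differentiableAt) (by fun_prop),
      deriv_const_mul _ (by fun_prop : DifferentiableAt ℝ (fun x : ℝ => 2 * x) x)]
    have h2x : deriv (fun x : ℝ => 2 * x) x = 2 := by
      simpa using ((hasDerivAt_id x).const_mul (2 : ℝ)).deriv
    rw [h2x]; ring
  have hddB : ∀ y : ℝ, deriv (deriv (fun y => B y - c * y ^ 2)) y
      = deriv (deriv B) y - 2 * c := by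
    intro y
    rw [funext hdB, deriv_fun_sub ((hB'.differentiable (by simp)).differentiableAt) (by fun_prop),
      deriv_const_mul _ (by fun_prop : DifferentiableAt ℝ (fun y : ℝ => 2 * y) y)]
    have h2y : deriv (fun y : ℝ => 2 * y) y = 2 := by
      simpa using ((hasDerivAt_id y).const_mul (2 : ℝ)).deriv
    rw [h2y]; ring
  constructor
  · intro p hp
    rw [hdA p.1, hdB p.2, hddA p.1, hddB p.2]
    exact algE4 p.1 p.2 (q p) (Sx p) (Sy p) _ _ _ _ c (hq0 p hp) (hrel p hp) (hE4 p hp)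
  · intro p hp
    rw [hdA p.1, hdB p.2, hddA p.1]
    exact algE5 p.1 p.2 (q p) (px q p) (py q p) (px (px q) p) (py (py q) p)
      (Sx p) (Sy p) (A p.1) (B p.2) _ _ _ c lam (hq0 p hp) (heuler p hp) (hrel p hp)
      (hkey p hp) (hE5 p hp)
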